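/- The number of integer vectors z in Z^n with squared Euclidean norm at most μ is at most 2·(μ + n/4)^{n/2}·π^{n/2}/(n/2)!, i.e., twice the volume of the Euclidean ball of radius √(μ + n/4) in R^n. -/

import Mathlib

open Real Finset MeasureTheory ENNReal

theorem stmt0 (n : ℕ) (hn : 1 ≤ n) (μ : ℝ) (hμ : 0 ≤ μ)
    (S : Finset (Fin n → ℤ)) (hS : ∀ z ∈ S, (∑ i, ((z i : ℝ)) ^ 2) ≤ μ) :
    (S.card : ℝ) ≤ 2 * Real.sqrt (μ + n / 4) ^ n * Real.pi ^ ((n : ℝ) / 2) /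
      Real.Gamma ((n : ℝ) / 2 + 1) := by
  classical
  haveI : Nonempty (Fin n) := ⟨⟨0, hn⟩⟩
  set r : ℝ := Real.sqrt (μ + n / 4) with hr
  have hμn : (0:ℝ) ≤ μ + n / 4 := by positivity
  -- the half-cubes
  set A : (Fin n → ℤ) → Set (Fin n → ℝ) := fun z =>
    (Set.pi Set.univ fun i => Set.Icc ((z i : ℝ) - 1/2) ((z i : ℝ) + 1/2)) ∩
      {x | ∑ i, (x i - (z i : ℝ)) * (z i : ℝ) ≤ 0} with hA
  have hmemA : ∀ z x, x ∈ A z ↔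
      (∀ i, (z i : ℝ) - 1/2 ≤ x i ∧ x i ≤ (z i : ℝ) + 1/2) ∧
        ∑ i, (x i - (z i : ℝ)) * (z i : ℝ) ≤ 0 := by
    intro z x
    constructor
    · rintro ⟨hbox, hsum⟩
      exact ⟨fun i => (hbox i (Set.mem_univ i) : _ ∈ Set.Icc _ _), hsum⟩
    · rintro ⟨hbox, hsum⟩
      exact ⟨fun i _ => Set.mem_Icc.mpr (hbox i), hsum⟩
  have hsummeas : ∀ z : Fin n → ℤ,
      Measurable fun x : Fin n → ℝ => ∑ i, (x i - (z i : ℝ)) * (z i : ℝ) := by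
    intro z
    exact Finset.measurable_sum _ fun i _ =>
      (((measurable_pi_apply i).sub measurable_const).mul measurable_const)
  have hmeas : ∀ z, MeasurableSet (A z) := by
    intro z
    exact (MeasurableSet.univ_pi fun i => measurableSet_Icc).inter
      (measurableSet_le (hsummeas z) measurable_const)
  -- each half-cube has volume at least 1/2
  have hvol : ∀ z, (1 : ℝ≥0∞) ≤ 2 * volume (A z) := by
    intro z
    set Q : Set (Fin n → ℝ) :=
      Set.pi Set.univ fun i => Set.Icc ((z i : ℝ) - 1/2) ((z i : ℝ) + 1/2) with hQdef
    have hQ : volume Q = 1 := by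
      rw [hQdef, volume_pi_pi]
      have : ∀ i : Fin n, volume (Set.Icc ((z i : ℝ) - 1/2) ((z i : ℝ) + 1/2)) = 1 := by
        intro i
        rw [Real.volume_Icc]
        norm_num
      simp [this]
      norm_num
    set v : Fin n → ℝ := fun i => 2 * (z i : ℝ) with hv
    have hmp := Measure.measurePreserving_sub_left (volume : Measure (Fin n → ℝ)) v
    have hsub : Q ⊆ A z ∪ (fun x => v - x) ⁻¹' (A z) := by
      intro x hx
      have hx' : ∀ i, (z i : ℝ) - 1/2 ≤ x i ∧ x i ≤ (z i : ℝ) + 1/2 := by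
        intro i
        have := hx i (Set.mem_univ i)
        simpa [Set.mem_Icc] using this
      by_cases hle : ∑ i, (x i - (z i : ℝ)) * (z i : ℝ) ≤ 0
      · left
        rw [hmemA]
        exact ⟨hx', hle⟩
      · right
        rw [Set.mem_preimage, hmemA]
        constructor
        · intro i
          have := hx' i
          constructor
          · simp only [Pi.sub_apply, hv]
            linarith [this.2]
          · simp only [Pi.sub_apply, hv]
            linarith [this.1]
        · have heq : ∑ i, ((v - x) i - (z i : ℝ)) * (z i : ℝ)
              = -∑ i, (x i - (z i : ℝ)) * (z i : ℝ) := by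
            rw [← Finset.sum_neg_distrib]
            refine Finset.sum_congr rfl fun i _ => ?_
            simp only [Pi.sub_apply, hv]
            ring
          rw [heq]
          linarith [lt_of_not_ge hle]
    calc (1 : ℝ≥0∞) = volume Q := hQ.symm
      _ ≤ volume (A z ∪ (fun x => v - x) ⁻¹' (A z)) := measure_mono hsub
      _ ≤ volume (A z) + volume ((fun x => v - x) ⁻¹' (A z)) := measure_union_le _ _
      _ = volume (A z) + volume (A z) := by
          rw [hmp.measure_preimage (hmeas z).nullMeasurableSet]
      _ = 2 * volume (A z) := (two_mul _).symm
  -- pairwise a.e. disjoint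
  have hdisj : (S : Set (Fin n → ℤ)).Pairwise (Function.onFun (AEDisjoint volume) A) := by
    intro z _ w _ hzw
    obtain ⟨i, hi⟩ : ∃ i, z i ≠ w i := Function.ne_iff.mp hzw
    have hplane : volume {x : Fin n → ℝ | x i = ((z i : ℝ) + (w i : ℝ)) / 2} = 0 := by
      set c : ℝ := ((z i : ℝ) + (w i : ℝ)) / 2
      have hset : {x : Fin n → ℝ | x i = c}
          = Set.pi Set.univ (fun j => if j = i then {c} else Set.univ) := by
        ext x
        simp only [Set.mem_setOf_eq, Set.mem_pi, Set.mem_univ, forall_true_left]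
        constructor
        · intro h j
          split_ifs with hj
          · subst hj; simpa using h
          · trivial
        · intro h; have := h i; simpa using this
      rw [hset, volume_pi_pi]
      exact Finset.prod_eq_zero (Finset.mem_univ i) (by simp)
    refine measure_mono_null ?_ hplane
    intro x hx
    obtain ⟨hxz, hxw⟩ := hx
    have h1 := (hmemA z x).mp hxz
    have h2 := (hmemA w x).mp hxw
    have hz1 := (h1.1 i).1
    have hz2 := (h1.1 i).2
    have hw1 := (h2.1 i).1
    have hw2 := (h2.1 i).2
    have hint : (1 : ℝ) ≤ |(z i : ℝ) - (w i : ℝ)| := by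
      have : (1 : ℤ) ≤ |z i - w i| := Int.one_le_abs (sub_ne_zero.mpr hi)
      have h' : ((|z i - w i| : ℤ) : ℝ) = |(z i : ℝ) - (w i : ℝ)| := by push_cast; ring_nf
      calc (1:ℝ) = ((1:ℤ) : ℝ) := by norm_num
        _ ≤ ((|z i - w i| : ℤ) : ℝ) := by exact_mod_cast this
        _ = |(z i : ℝ) - (w i : ℝ)| := h'
    show x i = ((z i : ℝ) + (w i : ℝ)) / 2
    rcases le_or_gt ((z i : ℝ)) ((w i : ℝ)) with hzw' | hzw'
    · have : (z i : ℝ) - (w i : ℝ) ≤ -1 := by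
        rcases abs_cases ((z i : ℝ) - (w i : ℝ)) with ⟨he, hp⟩ | ⟨he, hp⟩
        · linarith
        · linarith
      linarith
    · have : (1:ℝ) ≤ (z i : ℝ) - (w i : ℝ) := by
        rcases abs_cases ((z i : ℝ) - (w i : ℝ)) with ⟨he, hp⟩ | ⟨he, hp⟩
        · linarith
        · linarith
      linarith
  -- the ball
  set B : Set (Fin n → ℝ) := {x | ∑ i, x i ^ 2 ≤ μ + n / 4} with hB
  have hBmeas : MeasurableSet B := by
    exact measurableSet_le (Finset.measurable_sum _ fun i _ => (measurable_pi_apply i).pow_const 2)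
      measurable_const
  have hunion : (⋃ z ∈ S, A z) ⊆ B := by
    intro x hx
    simp only [Set.mem_iUnion] at hx
    obtain ⟨z, hzS, hxz⟩ := hx
    obtain ⟨hbox, hip⟩ := (hmemA z x).mp hxz
    have h1 : ∀ i, (x i - (z i : ℝ)) ^ 2 ≤ 1/4 := by
      intro i
      obtain ⟨hl, hr'⟩ := hbox i
      nlinarith
    have e1 : ∑ i, (x i - (z i : ℝ)) ^ 2 ≤ (n : ℝ) / 4 := by
      calc ∑ i, (x i - (z i : ℝ)) ^ 2 ≤ ∑ _i : Fin n, (1/4 : ℝ) :=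
            Finset.sum_le_sum fun i _ => h1 i
        _ = (n : ℝ) / 4 := by simp [Finset.sum_const, Fintype.card_fin]; ring
    have e3 := hS z hzS
    have key : ∑ i, x i ^ 2 = ∑ i, (x i - (z i : ℝ)) ^ 2
        + 2 * ∑ i, (x i - (z i : ℝ)) * (z i : ℝ) + ∑ i, ((z i : ℝ)) ^ 2 := by
      rw [Finset.mul_sum, ← Finset.sum_add_distrib, ← Finset.sum_add_distrib]
      refine Finset.sum_congr rfl fun i _ => ?_
      ring
    show ∑ i, x i ^ 2 ≤ μ + n / 4
    rw [key]
    linarith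
  -- counting
  have hcount : (S.card : ℝ≥0∞) ≤ 2 * volume B := by
    calc (S.card : ℝ≥0∞) = ∑ _z ∈ S, (1 : ℝ≥0∞) := by simp
      _ ≤ ∑ z ∈ S, 2 * volume (A z) := Finset.sum_le_sum fun z _ => hvol z
      _ = 2 * ∑ z ∈ S, volume (A z) := by rw [Finset.mul_sum]
      _ = 2 * volume (⋃ z ∈ S, A z) := by
          rw [measure_biUnion_finset₀ hdisj fun z _ => (hmeas z).nullMeasurableSet]
      _ ≤ 2 * volume B := by
          exact mul_le_mul_right (measure_mono hunion) 2
  -- volume of the ball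
  have hBvol : volume B = ENNReal.ofReal r ^ n
      * ENNReal.ofReal (Real.sqrt π ^ n / Real.Gamma (n / 2 + 1)) := by
    have hmp := EuclideanSpace.volume_preserving_symm_measurableEquiv_toLp (Fin n)
    have h1 : volume B = volume ((MeasurableEquiv.toLp 2 (Fin n → ℝ)).symm ⁻¹' B) :=
      (hmp.measure_preimage hBmeas.nullMeasurableSet).symm
    have heq : (MeasurableEquiv.toLp 2 (Fin n → ℝ)).symm ⁻¹' B
        = Metric.closedBall (0 : EuclideanSpace ℝ (Fin n)) r := by
      ext x
      simp only [Set.mem_preimage, Metric.mem_closedBall, dist_zero_right, hB, Set.mem_setOf_eq]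
      have hx : (MeasurableEquiv.toLp 2 (Fin n → ℝ)).symm x = fun i => x i := rfl
      rw [hx]
      have hnorm : ‖x‖ = Real.sqrt (∑ i, x i ^ 2) := by
        rw [EuclideanSpace.norm_eq]
        congr 1
        refine Finset.sum_congr rfl fun i _ => ?_
        rw [Real.norm_eq_abs, sq_abs]
      rw [hnorm, hr]
      constructor
      · intro h
        exact Real.sqrt_le_sqrt h
      · intro h
        nlinarith [Real.sq_sqrt (by positivity : (0:ℝ) ≤ ∑ i, x i ^ 2),
          Real.sq_sqrt hμn, Real.sqrt_nonneg (∑ i, x i ^ 2), Real.sqrt_nonneg (μ + n/4)]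
    rw [h1, heq, EuclideanSpace.volume_closedBall]
    simp [Fintype.card_fin]
  -- put it together
  have hΓpos : 0 < Real.Gamma ((n : ℝ) / 2 + 1) := Real.Gamma_pos_of_pos (by positivity)
  have hrpos : 0 ≤ r := Real.sqrt_nonneg _
  have hfin : 2 * volume B ≠ ⊤ := by
    rw [hBvol]
    exact ENNReal.mul_ne_top (by norm_num)
      (ENNReal.mul_ne_top (ENNReal.pow_ne_top ENNReal.ofReal_ne_top) ENNReal.ofReal_ne_top)
  have hreal := ENNReal.toReal_le_toReal (by simp) hfin |>.mpr hcount
  rw [hBvol] at hreal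
  have htr : ((S.card : ℝ≥0∞)).toReal = (S.card : ℝ) := by simp
  rw [htr] at hreal
  have h2 : (2 * (ENNReal.ofReal r ^ n
      * ENNReal.ofReal (Real.sqrt π ^ n / Real.Gamma (n / 2 + 1)))).toReal
      = 2 * (r ^ n * (Real.sqrt π ^ n / Real.Gamma (n / 2 + 1))) := by
    rw [ENNReal.toReal_mul, ENNReal.toReal_mul, ENNReal.toReal_pow,
      ENNReal.toReal_ofReal hrpos, ENNReal.toReal_ofReal (by positivity)]
    norm_num
  rw [h2] at hreal
  have hsq : Real.sqrt π ^ n = π ^ ((n : ℝ) / 2) := by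
    rw [Real.sqrt_eq_rpow, ← Real.rpow_natCast (π ^ ((1:ℝ)/2)) n, ← Real.rpow_mul pi_pos.le]
    congr 1
    ring
  rw [hsq] at hreal
  calc (S.card : ℝ) ≤ 2 * (r ^ n * (π ^ ((n : ℝ) / 2) / Real.Gamma ((n:ℝ) / 2 + 1))) := by
        convert hreal using 4 <;> norm_num
    _ = 2 * r ^ n * π ^ ((n : ℝ) / 2) / Real.Gamma ((n:ℝ) / 2 + 1) := by ring
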